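/- An invertible topological dynamical system (X,T) on a compact metric space is equicontinuous if and only if it is distal and locally almost periodic. -/

import Mathlib

open Metric Set

/-- The `n`-th iterate (with `n : ℤ`) of a homeomorphism. -/
def zIter {X : Type*} [TopologicalSpace X] (T : X ≃ₜ X) : ℤ → X → X
  | Int.ofNat n => (⇑T)^[n]
  | Int.negSucc n => (⇑T.symm)^[n + 1]

/-- Equicontinuity: a single modulus of continuity works for all forward iterates. -/
def Equicontinuous' {X : Type*} [MetricSpace X] (T : X → X) : Prop :=
  ∀ ε > (0:ℝ), ∃ δ > (0:ℝ), ∀ x y : X, dist x y < δ → ∀ n : ℕ, dist (T^[n] x) (T^[n] y) < ε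

/-- Distality: distinct points never become arbitrarily close under forward iteration. -/
def Distal {X : Type*} [MetricSpace X] (T : X → X) : Prop :=
  ∀ x y : X, x ≠ y → ∃ δ > (0:ℝ), ∀ n : ℕ, δ ≤ dist (T^[n] x) (T^[n] y)

/-- A set of integers is syndetic if it has bounded gaps. -/
def SyndeticInt (F : Set ℤ) : Prop :=
  ∃ N : ℕ, ∀ m : ℤ, ∃ n ∈ F, m ≤ n ∧ n ≤ m + N

/-- Local almost periodicity: every neighborhood is entered syndetically often by a
whole neighborhood. -/
def LocallyAlmostPeriodic {X : Type*} [MetricSpace X] (T : X ≃ₜ X) : Prop :=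
  ∀ x : X, ∀ U : Set X, IsOpen U → x ∈ U →
    ∃ V : Set X, IsOpen V ∧ x ∈ V ∧
      ∃ F : Set ℤ, SyndeticInt F ∧ ∀ n ∈ F, zIter T n '' V ⊆ U

open Filter
set_option linter.unusedSectionVars false
set_option maxHeartbeats 1000000

section ZIter

variable {X : Type*} [TopologicalSpace X] (T : X ≃ₜ X)

lemma zIter_natCast (n : ℕ) (x : X) : zIter T (n : ℤ) x = (⇑T)^[n] x := rfl

lemma zIter_zero (x : X) : zIter T 0 x = x := rfl

lemma zIter_succ (n : ℤ) (x : X) : zIter T (n + 1) x = T (zIter T n x) := by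
  cases n with
  | ofNat k =>
      show (⇑T)^[k+1] x = T ((⇑T)^[k] x)
      rw [Function.iterate_succ_apply']
  | negSucc k =>
      cases k with
      | zero =>
          show zIter T 0 x = T (zIter T (Int.negSucc 0) x)
          rw [zIter_zero]
          show x = T (T.symm x)
          simp
      | succ m =>
          show zIter T (Int.negSucc m) x = T (zIter T (Int.negSucc (m+1)) x)
          show (⇑T.symm)^[m+1] x = T ((⇑T.symm)^[m+1+1] x)
          rw [Function.iterate_succ_apply' (⇑T.symm) (m+1)]
          simp

lemma zIter_pred (n : ℤ) (x : X) : zIter T (n - 1) x = T.symm (zIter T n x) := by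
  have h := zIter_succ T (n - 1) x
  rw [sub_add_cancel] at h
  rw [h]; simp

lemma zIter_add (a b : ℤ) (x : X) : zIter T (a + b) x = zIter T a (zIter T b x) := by
  induction a using Int.induction_on with
  | zero => rw [zero_add, zIter_zero]
  | succ k ih =>
      have : (k : ℤ) + 1 + b = (k + b) + 1 := by ring
      rw [this, zIter_succ, ih, zIter_succ]
  | pred k ih =>
      have : (-(k : ℤ) - 1) + b = (-k + b) - 1 := by ring
      rw [this, zIter_pred, ih, zIter_pred]

end ZIter

section DD
variable {X : Type*} [MetricSpace X] [CompactSpace X] (T : X ≃ₜ X)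


lemma dist_le_diam' (x y : X) : dist x y ≤ Metric.diam (univ : Set X) :=
  Metric.dist_le_diam_of_mem isCompact_univ.isBounded (mem_univ x) (mem_univ y)

noncomputable def DD (x y : X) : ℝ := ⨆ n : ℕ, dist ((⇑T)^[n] x) ((⇑T)^[n] y)

lemma DD_bdd (x y : X) :
    BddAbove (Set.range fun n : ℕ => dist ((⇑T)^[n] x) ((⇑T)^[n] y)) :=
  ⟨Metric.diam (univ : Set X), by rintro r ⟨n, rfl⟩; exact dist_le_diam' _ _⟩

lemma le_DD (x y : X) (n : ℕ) : dist ((⇑T)^[n] x) ((⇑T)^[n] y) ≤ DD T x y :=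
  le_ciSup (DD_bdd T x y) n

lemma dist_le_DD (x y : X) : dist x y ≤ DD T x y := by
  simpa using le_DD T x y 0

lemma DD_le (x y : X) (c : ℝ) (h : ∀ n : ℕ, dist ((⇑T)^[n] x) ((⇑T)^[n] y) ≤ c) :
    DD T x y ≤ c := ciSup_le h

lemma DD_nonneg (x y : X) : 0 ≤ DD T x y := dist_nonneg.trans (dist_le_DD T x y)

lemma DD_symm (x y : X) : DD T x y = DD T y x := by
  unfold DD; simp only [dist_comm]

lemma DD_triangle (x y z : X) : DD T x z ≤ DD T x y + DD T y z :=
  DD_le T x z _ fun n => (dist_triangle _ _ _).trans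
    (add_le_add (le_DD T x y n) (le_DD T y z n))

lemma DD_step_le (x y : X) : DD T (T x) (T y) ≤ DD T x y :=
  DD_le T _ _ _ fun n => by
    rw [← Function.iterate_succ_apply, ← Function.iterate_succ_apply]
    exact le_DD T x y (n+1)

lemma DD_iter_le (x y : X) (k : ℕ) : DD T ((⇑T)^[k] x) ((⇑T)^[k] y) ≤ DD T x y := by
  induction k with
  | zero => simp
  | succ m ih =>
      rw [Function.iterate_succ_apply', Function.iterate_succ_apply']
      exact (DD_step_le T _ _).trans ih

lemma DD_mod (heq : Equicontinuous' (⇑T)) {ε : ℝ} (hε : 0 < ε) :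
    ∃ δ > (0:ℝ), ∀ x y : X, dist x y < δ → DD T x y ≤ ε := by
  obtain ⟨δ, hδ, h⟩ := heq ε hε
  exact ⟨δ, hδ, fun x y hxy => DD_le T x y ε fun n => (h x y hxy n).le⟩

lemma iter_cancel (i : ℕ) : ∀ j, i ≤ j → ∀ z : X,
    (⇑T)^[i] ((⇑T.symm)^[j] z) = (⇑T.symm)^[j - i] z := by
  induction i with
  | zero => intro j _ z; simp
  | succ m ih =>
      intro j h z
      obtain ⟨p, rfl⟩ : ∃ p, j = p + 1 := ⟨j - 1, by omega⟩
      rw [Function.iterate_succ_apply]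
      have h1 : T ((⇑T.symm)^[p+1] z) = (⇑T.symm)^[p] z := by
        rw [Function.iterate_succ_apply' (⇑T.symm) p]
        exact T.apply_symm_apply _
      rw [h1, ih p (by omega) z]
      congr 1; omega

lemma DD_step_eq (heq : Equicontinuous' (⇑T)) (x y : X) :
    DD T (T x) (T y) = DD T x y := by
  refine le_antisymm (DD_step_le T x y) ?_
  refine le_of_forall_pos_le_add fun ε hε => ?_
  obtain ⟨δ, hδ, hmod⟩ := DD_mod T heq (half_pos hε)
  -- backward orbit in X × X
  set u : ℕ → X × X := fun n => ((⇑T.symm)^[n] x, (⇑T.symm)^[n] y) with hu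
  obtain ⟨a, -, φ, hφ, hconv⟩ :=
    isCompact_univ.tendsto_subseq (x := u) (fun n => mem_univ _)
  rw [Metric.tendsto_atTop] at hconv
  obtain ⟨K, hK⟩ := hconv (δ/2) (half_pos hδ)
  set i := φ K with hi
  set j := φ (K+1) with hj
  have hij : i < j := hφ (Nat.lt_succ_self K)
  have hdu : dist (u j) (u i) < δ := by
    calc dist (u j) (u i) ≤ dist (u j) a + dist a (u i) := dist_triangle _ _ _
    _ < δ/2 + δ/2 := by
        rw [dist_comm a]
        exact add_lt_add (hK (K+1) (Nat.le_succ K)) (hK K le_rfl)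
    _ = δ := add_halves δ
  have hdx : dist ((⇑T.symm)^[j] x) ((⇑T.symm)^[i] x) < δ :=
    lt_of_le_of_lt (by rw [Prod.dist_eq]; exact le_max_left _ _) hdu
  have hdy : dist ((⇑T.symm)^[j] y) ((⇑T.symm)^[i] y) < δ :=
    lt_of_le_of_lt (by rw [Prod.dist_eq]; exact le_max_right _ _) hdu
  set k := j - i with hk
  have hk1 : 1 ≤ k := by omega
  -- DD bounds on backward points
  have hxk : DD T ((⇑T.symm)^[k] x) x ≤ ε/2 := by
    have h1 : (⇑T)^[i] ((⇑T.symm)^[j] x) = (⇑T.symm)^[k] x := iter_cancel T i j hij.le x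
    have h2 : (⇑T)^[i] ((⇑T.symm)^[i] x) = x := by
      have := iter_cancel T i i le_rfl x; simpa using this
    calc DD T ((⇑T.symm)^[k] x) x
        = DD T ((⇑T)^[i] ((⇑T.symm)^[j] x)) ((⇑T)^[i] ((⇑T.symm)^[i] x)) := by rw [h1, h2]
      _ ≤ DD T ((⇑T.symm)^[j] x) ((⇑T.symm)^[i] x) := DD_iter_le T _ _ i
      _ ≤ ε/2 := hmod _ _ hdx
  have hyk : DD T ((⇑T.symm)^[k] y) y ≤ ε/2 := by
    have h1 : (⇑T)^[i] ((⇑T.symm)^[j] y) = (⇑T.symm)^[k] y := iter_cancel T i j hij.le y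
    have h2 : (⇑T)^[i] ((⇑T.symm)^[i] y) = y := by
      have := iter_cancel T i i le_rfl y; simpa using this
    calc DD T ((⇑T.symm)^[k] y) y
        = DD T ((⇑T)^[i] ((⇑T.symm)^[j] y)) ((⇑T)^[i] ((⇑T.symm)^[i] y)) := by rw [h1, h2]
      _ ≤ DD T ((⇑T.symm)^[j] y) ((⇑T.symm)^[i] y) := DD_iter_le T _ _ i
      _ ≤ ε/2 := hmod _ _ hdy
  -- main chain
  obtain ⟨p, hp⟩ : ∃ p, k = p + 1 := ⟨k - 1, by omega⟩
  have hxx : (⇑T)^[k] ((⇑T.symm)^[k] x) = x := by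
    have := iter_cancel T k k le_rfl x; simpa using this
  have hyy : (⇑T)^[k] ((⇑T.symm)^[k] y) = y := by
    have := iter_cancel T k k le_rfl y; simpa using this
  calc DD T x y
      = DD T ((⇑T)^[k] ((⇑T.symm)^[k] x)) ((⇑T)^[k] ((⇑T.symm)^[k] y)) := by rw [hxx, hyy]
    _ = DD T ((⇑T)^[p] (T ((⇑T.symm)^[k] x))) ((⇑T)^[p] (T ((⇑T.symm)^[k] y))) := by
        have hstep : ∀ z : X, (⇑T)^[k] z = (⇑T)^[p] (T z) := fun z => by
          rw [hp, Function.iterate_succ_apply]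
        rw [hstep, hstep]
    _ ≤ DD T (T ((⇑T.symm)^[k] x)) (T ((⇑T.symm)^[k] y)) := DD_iter_le T _ _ p
    _ ≤ DD T (T ((⇑T.symm)^[k] x)) (T x) + DD T (T x) (T y) + DD T (T y) (T ((⇑T.symm)^[k] y)) := by
        calc DD T (T ((⇑T.symm)^[k] x)) (T ((⇑T.symm)^[k] y))
            ≤ DD T (T ((⇑T.symm)^[k] x)) (T x) + DD T (T x) (T ((⇑T.symm)^[k] y)) := DD_triangle T _ _ _
          _ ≤ DD T (T ((⇑T.symm)^[k] x)) (T x) + (DD T (T x) (T y) + DD T (T y) (T ((⇑T.symm)^[k] y))) := by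
              exact add_le_add le_rfl (DD_triangle T _ _ _)
          _ = _ := by ring
    _ ≤ ε/2 + DD T (T x) (T y) + ε/2 := by
        refine add_le_add (add_le_add ?_ le_rfl) ?_
        · exact (DD_step_le T _ _).trans hxk
        · exact (DD_step_le T _ _).trans (by rw [DD_symm]; exact hyk)
    _ = DD T (T x) (T y) + ε := by ring

variable (hec : Equicontinuous' (⇑T))
include hec

lemma DD_symm_step (x y : X) : DD T (T.symm x) (T.symm y) = DD T x y := by
  have h := DD_step_eq T hec (T.symm x) (T.symm y)
  simpa using h.symm

lemma DD_zIter (n : ℤ) (x y : X) : DD T (zIter T n x) (zIter T n y) = DD T x y := by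
  induction n using Int.induction_on with
  | zero => rw [zIter_zero, zIter_zero]
  | succ k ih => rw [zIter_succ, zIter_succ, DD_step_eq T hec, ih]
  | pred k ih =>
      have e : (-(k:ℤ) - 1) = (-k) - 1 := by ring
      rw [e, zIter_pred, zIter_pred, DD_symm_step T hec, ih]

/-- Distality from equicontinuity. -/
lemma distal_of_equi : Distal (⇑T) := by
  intro x y hxy
  set c := DD T x y with hc
  have hc0 : 0 < c := lt_of_lt_of_le (dist_pos.mpr hxy) (dist_le_DD T x y)
  obtain ⟨δ, hδ, hmod⟩ := DD_mod T hec (half_pos hc0)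
  refine ⟨δ, hδ, fun n => ?_⟩
  by_contra hlt
  push_neg at hlt
  have h1 : DD T ((⇑T)^[n] x) ((⇑T)^[n] y) ≤ c/2 := hmod _ _ hlt
  have h2 : DD T ((⇑T)^[n] x) ((⇑T)^[n] y) = c := by
    have := DD_zIter T hec (n : ℤ) x y
    rwa [zIter_natCast, zIter_natCast] at this
  linarith

/-- Local almost periodicity from equicontinuity. -/
lemma lap_of_equi : LocallyAlmostPeriodic T := by
  intro x U hU hxU
  obtain ⟨ε, hε, hball⟩ := Metric.isOpen_iff.mp hU x hxU
  obtain ⟨δ₁, hδ₁, hmod₁⟩ := DD_mod T hec (show (0:ℝ) < ε/4 by linarith)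
  refine ⟨ball x δ₁, isOpen_ball, mem_ball_self hδ₁,
    {n : ℤ | DD T (zIter T n x) x < ε/2}, ?_, ?_⟩
  · -- syndetic
    obtain ⟨δ₂, hδ₂, hmod₂⟩ := DD_mod T hec (show (0:ℝ) < ε/4 by linarith)
    -- finite cover of X by balls of radius δ₂/2
    obtain ⟨s, hsfin, hscov⟩ :=
      (totallyBounded_iff.mp (isCompact_univ : IsCompact (univ : Set X)).totallyBounded) (δ₂/2) (half_pos hδ₂)
    classical
    -- choice of a return time for each useful center
    let g : X → ℤ := fun c => if h : ∃ m : ℤ, zIter T m x ∈ ball c (δ₂/2) then h.choose else 0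
    let M : ℕ := hsfin.toFinset.sup fun c => (g c).natAbs
    refine ⟨2 * M, fun m => ?_⟩
    -- locate zIter (m + M) x in the cover
    have hmem : zIter T (m + (M:ℤ)) x ∈ ⋃ c ∈ s, ball c (δ₂/2) := hscov (mem_univ _)
    simp only [mem_iUnion, exists_prop] at hmem
    obtain ⟨c, hcs, hcball⟩ := hmem
    have hex : ∃ m' : ℤ, zIter T m' x ∈ ball c (δ₂/2) := ⟨m + M, hcball⟩
    have hgc : zIter T (g c) x ∈ ball c (δ₂/2) := by
      simp only [g, dif_pos hex]
      exact hex.choose_spec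
    have hMg : (g c).natAbs ≤ M :=
      Finset.le_sup (f := fun c => (g c).natAbs) (hsfin.mem_toFinset.mpr hcs)
    have hgabs : -(M:ℤ) ≤ g c ∧ g c ≤ M := by omega
    refine ⟨m + M - g c, ?_, by omega, by omega⟩
    have hdist : dist (zIter T (m + (M:ℤ)) x) (zIter T (g c) x) < δ₂ := by
      calc dist (zIter T (m + (M:ℤ)) x) (zIter T (g c) x)
          ≤ dist (zIter T (m + (M:ℤ)) x) c + dist c (zIter T (g c) x) := dist_triangle _ _ _
        _ < δ₂/2 + δ₂/2 := by
            rw [dist_comm c]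
            exact add_lt_add (mem_ball.mp hcball) (mem_ball.mp hgc)
        _ = δ₂ := add_halves δ₂
    have hDD : DD T (zIter T (m + (M:ℤ)) x) (zIter T (g c) x) ≤ ε/4 := hmod₂ _ _ hdist
    have key : DD T (zIter T (m + (M:ℤ) - g c) x) x ≤ ε/4 := by
      have e1 : zIter T (-(g c)) (zIter T (m + (M:ℤ)) x) = zIter T (m + (M:ℤ) - g c) x := by
        rw [← zIter_add]; congr 1; ring
      have e2 : zIter T (-(g c)) (zIter T (g c) x) = x := by
        rw [← zIter_add]; simp [zIter_zero]
      calc DD T (zIter T (m + (M:ℤ) - g c) x) x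
          = DD T (zIter T (-(g c)) (zIter T (m + (M:ℤ)) x)) (zIter T (-(g c)) (zIter T (g c) x)) := by
            rw [e1, e2]
        _ = DD T (zIter T (m + (M:ℤ)) x) (zIter T (g c) x) := DD_zIter T hec _ _ _
        _ ≤ ε/4 := hDD
    show DD T (zIter T (m + (M:ℤ) - g c) x) x < ε/2
    linarith
  · -- return condition
    rintro n hn z ⟨y, hyV, rfl⟩
    apply hball
    have h1 : dist (zIter T n y) (zIter T n x) ≤ ε/4 := by
      calc dist (zIter T n y) (zIter T n x) ≤ DD T (zIter T n y) (zIter T n x) :=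
            dist_le_DD T _ _
        _ = DD T y x := DD_zIter T hec n y x
        _ ≤ ε/4 := hmod₁ y x (mem_ball.mp hyV)
    have h2 : dist (zIter T n x) x ≤ DD T (zIter T n x) x := dist_le_DD T _ _
    have h3 : DD T (zIter T n x) x < ε/2 := hn
    have : dist (zIter T n y) x < ε := by
      calc dist (zIter T n y) x ≤ dist (zIter T n y) (zIter T n x) + dist (zIter T n x) x :=
            dist_triangle _ _ _
        _ < ε/4 + ε/2 := by linarith
        _ ≤ ε := by linarith
    exact mem_ball.mpr this


end DD

section Conv
variable {X : Type*} [MetricSpace X] [CompactSpace X] (T : X ≃ₜ X)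

/-- finitely many iterates have a common modulus of continuity -/
lemma iterUC (N : ℕ) {η : ℝ} (hη : 0 < η) :
    ∃ δ > (0:ℝ), ∀ r ≤ N, ∀ p q : X, dist p q < δ → dist ((⇑T)^[r] p) ((⇑T)^[r] q) < η := by
  induction N with
  | zero =>
      refine ⟨η, hη, fun r hr p q h => ?_⟩
      interval_cases r
      simpa using h
  | succ M ih =>
      obtain ⟨δ, hδ, hmod⟩ := ih
      have hcont : Continuous ((⇑T)^[M+1]) := T.continuous.iterate (M+1)
      have huc := CompactSpace.uniformContinuous_of_continuous hcont
      rw [Metric.uniformContinuous_iff] at huc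
      obtain ⟨δ', hδ', hmod'⟩ := huc η hη
      refine ⟨min δ δ', lt_min hδ hδ', fun r hr p q h => ?_⟩
      rcases Nat.lt_or_ge r (M+1) with hlt | hge
      · exact hmod r (by omega) p q (h.trans_le (min_le_left _ _))
      · have : r = M + 1 := by omega
        subst this
        exact hmod' (h.trans_le (min_le_right _ _))

lemma equi_of_distal_lap (hd : Distal (⇑T)) (hlap : LocallyAlmostPeriodic T) :
    Equicontinuous' (⇑T) := by
  by_contra hne
  unfold Equicontinuous' at hne
  push_neg at hne
  obtain ⟨ε, hε, hδall⟩ := hne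
  have hseq : ∀ k : ℕ, ∃ x y : X, dist x y < 1/(k+1) ∧
      ∃ n : ℕ, ε ≤ dist ((⇑T)^[n] x) ((⇑T)^[n] y) := by
    intro k
    obtain ⟨x, y, h1, n, h2⟩ := hδall (1/(k+1)) (by positivity)
    exact ⟨x, y, h1, n, h2⟩
  choose xs ys hxy ns hns using hseq
  -- convergent subsequence of the quadruple
  set u : ℕ → (X × X) × (X × X) :=
    fun k => ((xs k, ys k), ((⇑T)^[ns k] (xs k), (⇑T)^[ns k] (ys k))) with hu
  obtain ⟨⟨⟨x₀, y₀⟩, ⟨a, b⟩⟩, -, φ, hφ, hconv⟩ :=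
    (isCompact_univ : IsCompact (univ : Set ((X × X) × (X × X)))).tendsto_subseq
      (x := u) (fun n => mem_univ _)
  rw [Metric.tendsto_atTop] at hconv
  set L : (X × X) × (X × X) := ((x₀, y₀), (a, b)) with hL
  -- coordinate distance bounds
  have hcoord : ∀ k, dist (xs (φ k)) x₀ ≤ dist (u (φ k)) L ∧
      dist (ys (φ k)) y₀ ≤ dist (u (φ k)) L ∧
      dist ((⇑T)^[ns (φ k)] (xs (φ k))) a ≤ dist (u (φ k)) L ∧
      dist ((⇑T)^[ns (φ k)] (ys (φ k))) b ≤ dist (u (φ k)) L := by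
    intro k
    have h1 : dist (u (φ k)).1 L.1 ≤ dist (u (φ k)) L := by
      rw [Prod.dist_eq]; exact le_max_left _ _
    have h2 : dist (u (φ k)).2 L.2 ≤ dist (u (φ k)) L := by
      rw [Prod.dist_eq]; exact le_max_right _ _
    refine ⟨le_trans ?_ h1, le_trans ?_ h1, le_trans ?_ h2, le_trans ?_ h2⟩ <;>
      · rw [Prod.dist_eq]
        first | exact le_max_left _ _ | exact le_max_right _ _
  have hφk : ∀ k : ℕ, k ≤ φ k := fun k => hφ.le_apply
  -- x₀ = y₀
  have hxy0 : x₀ = y₀ := by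
    rw [← dist_eq_zero (x := x₀)]
    refine le_antisymm ?_ dist_nonneg
    refine le_of_forall_pos_le_add fun ρ hρ => ?_
    obtain ⟨K, hK⟩ := hconv (ρ/3) (by linarith)
    obtain ⟨k, hk1, hk2⟩ : ∃ k, K ≤ k ∧ 1/((φ k : ℝ)+1) < ρ/3 := by
      obtain ⟨k0, hk0⟩ := exists_nat_gt (3/ρ)
      refine ⟨max K k0, le_max_left _ _, ?_⟩
      have h1 : (3:ℝ)/ρ < φ (max K k0) + 1 := by
        have : (k0:ℝ) ≤ φ (max K k0) := by
          exact_mod_cast (le_max_right K k0).trans (hφk _)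
        linarith
      have h30 : (0:ℝ) < 3/ρ := by positivity
      have h2 := one_div_lt_one_div_of_lt h30 h1
      rwa [one_div_div] at h2
    have hA := (hcoord k).1
    have hB := (hcoord k).2.1
    have hC : dist (u (φ k)) L < ρ/3 := hK k hk1
    have hD := hxy (φ k)
    calc dist x₀ y₀
        ≤ dist x₀ (xs (φ k)) + dist (xs (φ k)) (ys (φ k)) + dist (ys (φ k)) y₀ :=
          dist_triangle4 _ _ _ _
      _ ≤ 0 + ρ := by
          rw [dist_comm x₀]
          linarith
  subst hxy0
  -- ε ≤ dist a b
  have hab : ε ≤ dist a b := by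
    have h5 : ∀ ρ > (0:ℝ), ε ≤ dist a b + 2*ρ := by
      intro ρ hρ
      obtain ⟨K, hK⟩ := hconv ρ hρ
      have hC : dist (u (φ K)) L < ρ := hK K le_rfl
      have hA := (hcoord K).2.2.1
      have hB := (hcoord K).2.2.2
      have h6 := hns (φ K)
      have h7 := dist_triangle4 ((⇑T)^[ns (φ K)] (xs (φ K))) a b ((⇑T)^[ns (φ K)] (ys (φ K)))
      rw [dist_comm b] at h7
      linarith [dist_comm ((⇑T)^[ns (φ K)] (ys (φ K))) b ▸ hB]
    by_contra hlt
    push_neg at hlt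
    have := h5 ((ε - dist a b)/4) (by linarith)
    linarith
  have hne' : a ≠ b := by
    intro h; rw [h, dist_self] at hab; linarith
  -- distality at (a, b)
  obtain ⟨δ₀, hδ₀, hdist₀⟩ := hd a b hne'
  set η := δ₀/5 with hη
  have hη0 : 0 < η := by positivity
  -- LAP at x₀
  obtain ⟨V, hVopen, hx₀V, F, ⟨N, hsyn⟩, hFV⟩ :=
    hlap x₀ (ball x₀ η) isOpen_ball (mem_ball_self hη0)
  obtain ⟨ρ, hρ, hρV⟩ := Metric.isOpen_iff.mp hVopen x₀ hx₀V
  obtain ⟨δs, hδs, hmods⟩ := iterUC T N hη0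
  -- pick a good index k
  obtain ⟨K, hK⟩ := hconv (min ρ δs) (lt_min hρ hδs)
  set k := K with hkdef
  have hC : dist (u (φ K)) L < min ρ δs := hK K le_rfl
  have hA := (hcoord K).1
  have hB := (hcoord K).2.1
  have hA' := (hcoord K).2.2.1
  have hB' := (hcoord K).2.2.2
  have hxV : xs (φ K) ∈ V := hρV (by
    rw [mem_ball]
    exact lt_of_le_of_lt hA (hC.trans_le (min_le_left _ _)))
  have hyV : ys (φ K) ∈ V := hρV (by
    rw [mem_ball]
    exact lt_of_le_of_lt hB (hC.trans_le (min_le_left _ _)))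
  have hxa : dist ((⇑T)^[ns (φ K)] (xs (φ K))) a < δs :=
    lt_of_le_of_lt hA' (hC.trans_le (min_le_right _ _))
  have hyb : dist ((⇑T)^[ns (φ K)] (ys (φ K))) b < δs :=
    lt_of_le_of_lt hB' (hC.trans_le (min_le_right _ _))
  -- syndeticity: find return time
  set m : ℕ := ns (φ K) with hm
  obtain ⟨f, hfF, hf1, hf2⟩ := hsyn (m : ℤ)
  set r : ℕ := (f - m).toNat with hr
  have hrN : r ≤ N := by omega
  have hfr : f = (r : ℤ) + (m : ℤ) := by omega
  have hiter : ∀ z : X, zIter T f z = (⇑T)^[r] ((⇑T)^[m] z) := by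
    intro z
    rw [hfr, zIter_add, zIter_natCast, zIter_natCast]
  -- images under zIter f land in ball x₀ η
  have hxball : zIter T f (xs (φ K)) ∈ ball x₀ η :=
    hFV f hfF ⟨xs (φ K), hxV, rfl⟩
  have hyball : zIter T f (ys (φ K)) ∈ ball x₀ η :=
    hFV f hfF ⟨ys (φ K), hyV, rfl⟩
  rw [hiter, mem_ball] at hxball hyball
  -- estimate dist (T^[r] a) (T^[r] b)
  have h1 : dist ((⇑T)^[r] a) ((⇑T)^[r] ((⇑T)^[m] (xs (φ K)))) < η := by
    refine hmods r hrN a _ ?_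
    rw [dist_comm]; exact hxa
  have h2 : dist ((⇑T)^[r] b) ((⇑T)^[r] ((⇑T)^[m] (ys (φ K)))) < η := by
    refine hmods r hrN b _ ?_
    rw [dist_comm]; exact hyb
  have hfar := hdist₀ r
  have hclose : dist ((⇑T)^[r] a) ((⇑T)^[r] b) < δ₀ := by
    calc dist ((⇑T)^[r] a) ((⇑T)^[r] b)
        ≤ dist ((⇑T)^[r] a) ((⇑T)^[r] ((⇑T)^[m] (xs (φ K)))) +
          dist ((⇑T)^[r] ((⇑T)^[m] (xs (φ K)))) x₀ +
          dist x₀ ((⇑T)^[r] ((⇑T)^[m] (ys (φ K)))) +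
          dist ((⇑T)^[r] ((⇑T)^[m] (ys (φ K)))) ((⇑T)^[r] b) := by
            have t1 := dist_triangle4 ((⇑T)^[r] a) ((⇑T)^[r] ((⇑T)^[m] (xs (φ K)))) x₀
              ((⇑T)^[r] b)
            have t2 := dist_triangle x₀ ((⇑T)^[r] ((⇑T)^[m] (ys (φ K)))) ((⇑T)^[r] b)
            linarith
      _ < η + η + η + η := by
          rw [dist_comm x₀]
          have h2' : dist ((⇑T)^[r] ((⇑T)^[m] (ys (φ K)))) ((⇑T)^[r] b) < η := by
            rw [dist_comm]; exact h2
          exact add_lt_add (add_lt_add (add_lt_add h1 hxball) hyball) h2'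
      _ ≤ δ₀ := by rw [hη]; linarith
  linarith
end Conv

theorem equicontinuous_iff_distal_and_lap {X : Type*} [MetricSpace X] [CompactSpace X]
    (T : X ≃ₜ X) :
    Equicontinuous' T ↔ (Distal T ∧ LocallyAlmostPeriodic T) := by
  constructor
  · intro hec
    exact ⟨distal_of_equi T hec, lap_of_equi T hec⟩
  · rintro ⟨hd, hlap⟩
    exact equi_of_distal_lap T hd hlap
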